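/- Suppose differentiable functions S, A, I, V, R, D : ℝ → ℝ satisfy the SAIVRD system for all t ≥ 0 with the stated initial conditions, and suppose in addition that S(t) ≥ 0 for all t ≥ 0. Then A(t) ≥ A₀·exp(−(w + μ)·t) > 0 for all t ≥ 0. -/

import Mathlib

/-- Lower bound on the asymptomatic class: if `S t ≥ 0` for all `t ≥ 0`, then
`A t ≥ A₀ · exp(−(w + μ)·t) > 0` for all `t ≥ 0`. -/
theorem saivrd_A_positive
    (B β v w ρ γ μ : ℝ) (hB : 0 ≤ B) (hβ : 0 ≤ β) (hv : 0 ≤ v) (hw : 0 ≤ w)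
    (hρ : 0 ≤ ρ) (hγ : 0 ≤ γ) (hμ : 0 < μ)
    (S A I V R D : ℝ → ℝ) (S₀ A₀ N₀ : ℝ)
    (hS₀ : 0 < S₀) (hA₀ : 0 < A₀) (hN₀ : N₀ = S₀ + A₀)
    (hSdiff : Differentiable ℝ S) (hAdiff : Differentiable ℝ A)
    (hIdiff : Differentiable ℝ I) (hVdiff : Differentiable ℝ V)
    (hRdiff : Differentiable ℝ R) (hDdiff : Differentiable ℝ D)
    (hS' : ∀ t ≥ (0 : ℝ), HasDerivAt S (B - v * S t - (β / N₀) * A t * S t - μ * S t) t)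
    (hA' : ∀ t ≥ (0 : ℝ), HasDerivAt A ((β / N₀) * A t * S t - (w + μ) * A t) t)
    (hI' : ∀ t ≥ (0 : ℝ), HasDerivAt I (w * A t - (ρ + γ + μ) * I t) t)
    (hV' : ∀ t ≥ (0 : ℝ), HasDerivAt V (v * S t - μ * V t) t)
    (hR' : ∀ t ≥ (0 : ℝ), HasDerivAt R (γ * I t - μ * R t) t)
    (hD' : ∀ t ≥ (0 : ℝ), HasDerivAt D (ρ * I t) t)
    (hS0 : S 0 = S₀) (hA0 : A 0 = A₀) (hI0 : I 0 = 0) (hV0 : V 0 = 0)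
    (hR0 : R 0 = 0) (hD0 : D 0 = 0)
    (hSnonneg : ∀ t ≥ (0 : ℝ), 0 ≤ S t) :
    ∀ t ≥ (0 : ℝ),
      A₀ * Real.exp (-(w + μ) * t) ≤ A t ∧
      0 < A₀ * Real.exp (-(w + μ) * t) := by
  intro t ht
  have hN₀pos : (0:ℝ) < N₀ := by rw [hN₀]; linarith
  have hk : (0:ℝ) ≤ β / N₀ := div_nonneg hβ hN₀pos.le
  have hgcont : Continuous (fun s => (β / N₀) * S s) :=
    continuous_const.mul hSdiff.continuous
  set φ : ℝ → ℝ := fun x => ∫ s in (0:ℝ)..x, (β / N₀) * S s with hφdef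
  have hφ : ∀ x : ℝ, HasDerivAt φ ((β / N₀) * S x) x := by
    intro x
    exact intervalIntegral.integral_hasDerivAt_right
      (hgcont.intervalIntegrable 0 x)
      (hgcont.stronglyMeasurableAtFilter _ _)
      hgcont.continuousAt
  have hφdiff : Differentiable ℝ φ := fun x => (hφ x).differentiableAt
  set f : ℝ → ℝ := fun x => A x * Real.exp ((w + μ) * x - φ x) with hfdef
  have hf' : ∀ x ≥ (0:ℝ), HasDerivAt f 0 x := by
    intro x hx
    have h2 : HasDerivAt (fun y => (w + μ) * y - φ y) ((w + μ) - (β / N₀) * S x) x := by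
      exact (((hasDerivAt_id' x).const_mul (w + μ)).sub (hφ x)).congr_deriv (by ring)
    have h3 := h2.exp
    have h4 := (hA' x hx).mul h3
    refine h4.congr_deriv ?_
    ring
  have hfc : Continuous f :=
    hAdiff.continuous.mul
      ((continuous_const.mul continuous_id).sub hφdiff.continuous).rexp
  have hconst : f t = f 0 := by
    have := constant_of_has_deriv_right_zero (f := f) (a := 0) (b := t)
      hfc.continuousOn
      (fun x hx => ((hf' x hx.1).hasDerivWithinAt))
    exact this t ⟨ht, le_refl t⟩
  have hf0 : f 0 = A₀ := by
    simp [hfdef, hφdef, hA0]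
  have hφnonneg : 0 ≤ φ t := by
    apply intervalIntegral.integral_nonneg ht
    intro s hs
    exact mul_nonneg hk (hSnonneg s hs.1)
  have hAval : A t = A₀ * Real.exp (φ t - (w + μ) * t) := by
    have h := hconst.trans hf0
    have he : Real.exp ((w + μ) * t - φ t) ≠ 0 := Real.exp_ne_zero _
    simp only [hfdef] at h
    rw [eq_comm, ← h]
    rw [mul_assoc, ← Real.exp_add]
    ring_nf
    simp
  constructor
  · rw [hAval]
    apply mul_le_mul_of_nonneg_left _ hA₀.le
    apply Real.exp_le_exp.2
    linarith
  · positivity
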